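/- Let (𝔤, 𝔥, 𝔫) be a tame triplet and ρ an induced-type 𝔤-module structure on U(𝔫_α). Let ρ̄ : U(𝔤) → End_k(U(𝔫_α)) be the algebra homomorphism induced by ρ via the universal property of U(𝔤), and define φ : U(𝔤) → U(𝔫_α) by φ(u) = ρ̄(u)(1). Then φ is surjective, and its kernel equals the left ideal of U(𝔤) generated by ι_𝔤(𝔥), i.e. the k-span of the elements u·ι_𝔤(h) with u ∈ U(𝔤) and h ∈ 𝔥, where ι_𝔤 : 𝔤 → U(𝔤) is the canonical map. -/

import Mathlib

open UniversalEnvelopingAlgebra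

attribute [local instance 100] LieRing.ofAssociativeRing

theorem uea_ind (R : Type*) [CommRing R] (L : Type*) [LieRing L] [LieAlgebra R L]
    {p : UniversalEnvelopingAlgebra R L → Prop}
    (halg : ∀ r, p (algebraMap R _ r))
    (hι : ∀ x : L, p (ι R x))
    (hmul : ∀ a b, p a → p b → p (a * b))
    (hadd : ∀ a b, p a → p b → p (a + b)) :
    ∀ u, p u := by
  intro u
  obtain ⟨t, rfl⟩ : ∃ t, mkAlgHom R L t = u := RingCon.mkₐ_surjective (α := R) _ u
  induction t using TensorAlgebra.induction with
  | algebraMap r => rw [AlgHom.commutes]; exact halg r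
  | ι x => exact hι x
  | mul a b ha hb => rw [map_mul]; exact hmul _ _ ha hb
  | add a b ha hb => rw [map_add]; exact hadd _ _ ha hb

/-- Let `(L, H, N)` be a tame triplet, `M` a Lie algebra realizing `N` with
the bracket `α` (as in Statement 11), and `ρ` an induced-type `L`-module structure on `U(M)`.
Let `ρ̄ : U(L) → End_k(U(M))` be the algebra homomorphism induced by `ρ` and define
`φ : U(L) → U(M)` by `φ(u) = ρ̄(u)(1)`.  Then `φ` is surjective and its kernel is the left
ideal of `U(L)` generated by `ι(H)`, i.e. the `k`-span of the elements `u·ι(h)`, `u ∈ U(L)`,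
`h ∈ H`. -/
theorem stmt_14 (k : Type*) [Field k] [CharZero k] (L : Type*) [LieRing L] [LieAlgebra k L]
    (H : LieSubalgebra k L) (N : Submodule k L)
    (hcompl : IsCompl H.toSubmodule N)
    (πH πN : L →ₗ[k] L)
    (hπH : ∀ x : L, πH x ∈ H) (hπN : ∀ x : L, πN x ∈ N)
    (hsum : ∀ x : L, πH x + πN x = x)
    (hHN : ∀ h ∈ H, ∀ x ∈ N, ⁅h, x⁆ ∈ N)
    (htame : ∀ x ∈ N, ∀ y ∈ N, ∀ z ∈ N, ⁅πH ⁅x, y⁆, z⁆ = (0 : L))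
    (M : Type*) [LieRing M] [LieAlgebra k M]
    (incl : M →ₗ[k] L) (hinj : Function.Injective incl)
    (hrange : LinearMap.range incl = N)
    (hbr : ∀ a b : M, incl ⁅a, b⁆ = πN ⁅incl a, incl b⁆)
    (ρ : L →ₗ⁅k⁆ Module.End k (UniversalEnvelopingAlgebra k M))
    (hρ₁ : ∀ (a : M) (u : UniversalEnvelopingAlgebra k M),
      ρ (incl a) u = UniversalEnvelopingAlgebra.ι k a * u)
    (hρ₂ : ∀ h ∈ H, ρ h (1 : UniversalEnvelopingAlgebra k M) = 0)
    (hρ₃ : ∀ h ∈ H, ∀ u v : UniversalEnvelopingAlgebra k M,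
      ρ h (u * v) = ρ h u * v + u * ρ h v)
    (hρ₄ : ∀ h ∈ H, ∀ a b : M, incl b = πN ⁅h, incl a⁆ →
      ρ h (UniversalEnvelopingAlgebra.ι k a) = UniversalEnvelopingAlgebra.ι k b) :
    Function.Surjective
        (fun u : UniversalEnvelopingAlgebra k L =>
          (UniversalEnvelopingAlgebra.lift k ρ u) (1 : UniversalEnvelopingAlgebra k M)) ∧
      ∀ w : UniversalEnvelopingAlgebra k L,
        (UniversalEnvelopingAlgebra.lift k ρ w) (1 : UniversalEnvelopingAlgebra k M) = 0 ↔
          w ∈ Submodule.span k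
            {x : UniversalEnvelopingAlgebra k L |
              ∃ u : UniversalEnvelopingAlgebra k L, ∃ h ∈ H,
                x = u * UniversalEnvelopingAlgebra.ι k h} := by
  classical
  -- abbreviations
  set J : Submodule k (UniversalEnvelopingAlgebra k L) := Submodule.span k
      {x : UniversalEnvelopingAlgebra k L |
        ∃ u : UniversalEnvelopingAlgebra k L, ∃ h ∈ H,
          x = u * UniversalEnvelopingAlgebra.ι k h} with hJdef
  set S : Subalgebra k (UniversalEnvelopingAlgebra k L) :=
      Algebra.adjoin k (Set.range fun a : M => ι k (incl a)) with hSdef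
  set B : Subalgebra k (UniversalEnvelopingAlgebra k L) :=
      Algebra.adjoin k {x | ∃ h ∈ H, x = ι k h} with hBdef
  set JS1 : Submodule k (UniversalEnvelopingAlgebra k L) := Submodule.span k
      {x | ∃ s ∈ S, ∃ h ∈ H, x = s * ι k h} with hJS1def
  set JS : Submodule k (UniversalEnvelopingAlgebra k L) := Submodule.span k
      {x | ∃ s ∈ S, ∃ b ∈ B, ∃ h ∈ H, x = s * (b * ι k h)} with hJSdef
  -- basic facts
  have hNmem : ∀ x : L, x ∈ N → ∃ a : M, incl a = x := by
    intro x hx; rw [← hrange] at hx; exact hx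
  have hπN_self : ∀ x : L, x ∈ N → πN x = x := by
    intro x hx
    have h1 : πH x = x - πN x := by rw [eq_sub_iff_add_eq, hsum]
    have h2 : πH x ∈ N := h1 ▸ Submodule.sub_mem N hx (hπN x)
    have h3 : πH x = 0 := (Submodule.disjoint_def.mp hcompl.1) _ (hπH x) h2
    have := hsum x; rw [h3, zero_add] at this; exact this
  have hbracket : ∀ a : M, ∀ x : L,
      ι k x * ι k (incl a) = ι k (incl a) * ι k x + ι k ⁅x, incl a⁆ := by
    intro a x
    have h := LieHom.map_lie (ι k : L →ₗ⁅k⁆ UniversalEnvelopingAlgebra k L) x (incl a)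
    rw [Ring.lie_def] at h
    rw [h]; noncomm_ring
  -- membership helpers
  have hSgen : ∀ a : M, ι k (incl a) ∈ S := fun a => Algebra.subset_adjoin ⟨a, rfl⟩
  have hJmem : ∀ (u : UniversalEnvelopingAlgebra k L), ∀ h ∈ H, u * ι k h ∈ J :=
    fun u h hh => Submodule.subset_span ⟨u, h, hh, rfl⟩
  have hJS1mem : ∀ s ∈ S, ∀ h ∈ H, s * ι k h ∈ JS1 :=
    fun s hs h hh => Submodule.subset_span ⟨s, hs, h, hh, rfl⟩
  have hJSmem : ∀ s ∈ S, ∀ b ∈ B, ∀ h ∈ H, s * (b * ι k h) ∈ JS :=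
    fun s hs b hb h hh => Submodule.subset_span ⟨s, hs, b, hb, h, hh, rfl⟩
  have hJS1_le_JS : JS1 ≤ JS := by
    rw [hJS1def, Submodule.span_le]
    rintro x ⟨s, hs, h, hh, rfl⟩
    have : s * ι k h = s * ((1 : UniversalEnvelopingAlgebra k L) * ι k h) := by rw [one_mul]
    rw [this]
    exact hJSmem s hs 1 (one_mem B) h hh
  have hJS_le_J : JS ≤ J := by
    rw [hJSdef, Submodule.span_le]
    rintro x ⟨s, hs, b, hb, h, hh, rfl⟩
    rw [← mul_assoc]
    exact hJmem (s * b) h hh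
  have hJstab : ∀ u : UniversalEnvelopingAlgebra k L, ∀ j ∈ J, u * j ∈ J := by
    intro u j hj
    induction hj using Submodule.span_induction with
    | mem x hx =>
      obtain ⟨u', h, hh, rfl⟩ := hx
      rw [← mul_assoc]; exact hJmem (u * u') h hh
    | zero => rw [mul_zero]; exact zero_mem _
    | add x y _ _ hx hy => rw [mul_add]; exact add_mem hx hy
    | smul a x _ hx => rw [mul_smul_comm]; exact Submodule.smul_mem _ _ hx
  have hS_JS1 : ∀ s ∈ S, ∀ j ∈ JS1, s * j ∈ JS1 := by
    intro s hs j hj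
    induction hj using Submodule.span_induction with
    | mem x hx =>
      obtain ⟨s', hs', h, hh, rfl⟩ := hx
      rw [← mul_assoc]; exact hJS1mem _ (mul_mem hs hs') _ hh
    | zero => rw [mul_zero]; exact zero_mem _
    | add x y _ _ hx hy => rw [mul_add]; exact add_mem hx hy
    | smul a x _ hx => rw [mul_smul_comm]; exact Submodule.smul_mem _ _ hx
  -- Lemma A : for h in H and s in S, ι h * s ∈ S ⊔ JS1
  have hAH : ∀ s ∈ S, ∀ h ∈ H, ι k h * s ∈ S.toSubmodule ⊔ JS1 := by
    intro s hs
    induction hs using Algebra.adjoin_induction with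
    | mem x hx =>
      intro h hh
      obtain ⟨a, rfl⟩ := hx
      have hNa : incl a ∈ N := hrange ▸ LinearMap.mem_range_self incl a
      obtain ⟨b, hb⟩ := hNmem _ (hHN h hh _ hNa)
      have e := hbracket a h
      rw [e, ← hb]
      exact Submodule.add_mem _
        (Submodule.mem_sup_right (hJS1mem _ (hSgen a) _ hh))
        (Submodule.mem_sup_left (hSgen b))
    | algebraMap r =>
      intro h hh
      have e : ι k h * algebraMap k _ r = r • ((1 : UniversalEnvelopingAlgebra k L) * ι k h) := by
        rw [one_mul, ← Algebra.commutes, Algebra.smul_def]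
      rw [e]
      exact Submodule.mem_sup_right (Submodule.smul_mem _ _ (hJS1mem 1 (one_mem S) h hh))
    | add x y hx hy ihx ihy =>
      intro h hh
      rw [mul_add]
      exact Submodule.add_mem _ (ihx h hh) (ihy h hh)
    | mul x y hx hy ihx ihy =>
      intro h hh
      have hjy : ∀ j' ∈ JS1, j' * y ∈ S.toSubmodule ⊔ JS1 := by
        intro j' hj'
        induction hj' using Submodule.span_induction with
        | mem c hc =>
          obtain ⟨s', hs', h', hh', rfl⟩ := hc
          obtain ⟨σ'', hσ'', j'', hj'', he''⟩ := Submodule.mem_sup.mp (ihy h' hh')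
          have e2 : s' * ι k h' * y = s' * σ'' + s' * j'' := by
            rw [mul_assoc, ← he'', mul_add]
          rw [e2]
          exact Submodule.add_mem _
            (Submodule.mem_sup_left ((Subalgebra.mem_toSubmodule S).mpr (mul_mem hs' ((Subalgebra.mem_toSubmodule S).mp hσ''))))
            (Submodule.mem_sup_right (hS_JS1 s' hs' j'' hj''))
        | zero => rw [zero_mul]; exact zero_mem _
        | add c d _ _ hc hd => rw [add_mul]; exact add_mem hc hd
        | smul a c _ hc => rw [smul_mul_assoc]; exact Submodule.smul_mem _ _ hc
      obtain ⟨σ, hσ, j, hj, he⟩ := Submodule.mem_sup.mp (ihx h hh)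
      have e : ι k h * (x * y) = σ * y + j * y := by rw [← mul_assoc, ← he, add_mul]
      rw [e]
      exact Submodule.add_mem _
        (Submodule.mem_sup_left ((Subalgebra.mem_toSubmodule S).mpr (mul_mem ((Subalgebra.mem_toSubmodule S).mp hσ) hy)))
        (hjy j hj)
  have hAx : ∀ x : L, ∀ s ∈ S, ι k x * s ∈ S.toSubmodule ⊔ JS1 := by
    intro x s hs
    obtain ⟨a, ha⟩ := hNmem _ (hπN x)
    have e : ι k x * s = ι k (πH x) * s + ι k (incl a) * s := by
      rw [← add_mul, ← map_add, ha, hsum]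
    rw [e]
    exact Submodule.add_mem _ (hAH s hs _ (hπH x))
      (Submodule.mem_sup_left ((Subalgebra.mem_toSubmodule S).mpr (mul_mem (hSgen a) hs)))
  -- everything is in S + JS
  have hTop : ∀ w : UniversalEnvelopingAlgebra k L, w ∈ S.toSubmodule ⊔ JS := by
    have hle : S.toSubmodule ⊔ JS1 ≤ S.toSubmodule ⊔ JS := sup_le_sup_left hJS1_le_JS _
    have hmulT : ∀ u : UniversalEnvelopingAlgebra k L,
        ∀ t ∈ S.toSubmodule ⊔ JS, u * t ∈ S.toSubmodule ⊔ JS := by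
      refine uea_ind k L ?_ ?_ ?_ ?_
      · intro r t ht
        have e : algebraMap k _ r * t = r • t := (Algebra.smul_def r t).symm
        rw [e]; exact Submodule.smul_mem _ _ ht
      · intro x t ht
        have hjmem : ∀ j' ∈ JS, ι k x * j' ∈ S.toSubmodule ⊔ JS := by
          intro j' hj'
          induction hj' using Submodule.span_induction with
          | mem c hc =>
            obtain ⟨s, hs, b, hb, h, hh, rfl⟩ := hc
            have hj1mem : ∀ j1 ∈ JS1, j1 * (b * ι k h) ∈ JS := by
              intro j1 hj1
              induction hj1 using Submodule.span_induction with
              | mem c' hc' =>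
                obtain ⟨s'', hs'', h'', hh'', rfl⟩ := hc'
                have e3 : s'' * ι k h'' * (b * ι k h) = s'' * ((ι k h'' * b) * ι k h) := by
                  rw [mul_assoc s'' (ι k h'') (b * ι k h), ← mul_assoc (ι k h'') b (ι k h)]
                rw [e3]
                exact hJSmem s'' hs'' _ (mul_mem (Algebra.subset_adjoin ⟨h'', hh'', rfl⟩) hb) h hh
              | zero => rw [zero_mul]; exact zero_mem _
              | add c' d' _ _ hc' hd' => rw [add_mul]; exact add_mem hc' hd'
              | smul a c' _ hc' => rw [smul_mul_assoc]; exact Submodule.smul_mem _ _ hc'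
            obtain ⟨σ', hσ', j1, hj1, he'⟩ := Submodule.mem_sup.mp (hAx x s hs)
            have e2 : ι k x * (s * (b * ι k h)) = σ' * (b * ι k h) + j1 * (b * ι k h) := by
              rw [← mul_assoc, ← he', add_mul]
            rw [e2]
            exact Submodule.add_mem _
              (Submodule.mem_sup_right (hJSmem σ' ((Subalgebra.mem_toSubmodule S).mp hσ') b hb h hh))
              (Submodule.mem_sup_right (hj1mem j1 hj1))
          | zero => rw [mul_zero]; exact zero_mem _
          | add c d _ _ hc hd => rw [mul_add]; exact add_mem hc hd
          | smul a c _ hc => rw [mul_smul_comm]; exact Submodule.smul_mem _ _ hc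
        obtain ⟨σ, hσ, j, hj, he⟩ := Submodule.mem_sup.mp ht
        have e : ι k x * t = ι k x * σ + ι k x * j := by rw [← mul_add, he]
        rw [e]
        exact Submodule.add_mem _ (hle (hAx x σ ((Subalgebra.mem_toSubmodule S).mp hσ)))
          (hjmem j hj)
      · intro a b ha hb t ht
        rw [mul_assoc]; exact ha _ (hb t ht)
      · intro a b ha hb t ht
        rw [add_mul]; exact Submodule.add_mem _ (ha t ht) (hb t ht)
    intro w
    have := hmulT w 1 (Submodule.mem_sup_left ((Subalgebra.mem_toSubmodule S).mpr (one_mem S)))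
    rwa [mul_one] at this
  -- commutation with S
  have hcommS : ∀ x : L, (∀ m : M, ⁅x, incl m⁆ = (0 : L)) → ∀ s ∈ S, ι k x * s = s * ι k x := by
    intro x hx s hs
    induction hs using Algebra.adjoin_induction with
    | mem c hc =>
      obtain ⟨a, rfl⟩ := hc
      have e := hbracket a x
      rw [hx a, map_zero, add_zero] at e
      exact e
    | algebraMap r => exact (Algebra.commutes r _).symm
    | add c d _ _ ihc ihd => rw [mul_add, add_mul, ihc, ihd]
    | mul c d _ _ ihc ihd => rw [← mul_assoc, ihc, mul_assoc, ihd, ← mul_assoc]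
  have hH0 : ∀ x : L, x ∈ H → (∀ m : M, ⁅x, incl m⁆ = (0 : L)) →
      ∀ w : UniversalEnvelopingAlgebra k L, ι k x * w ∈ J := by
    intro x hxH hx0 w
    have hjcase : ∀ j ∈ JS, ι k x * j ∈ J := by
      intro j hj
      induction hj using Submodule.span_induction with
      | mem c hc =>
        obtain ⟨s, hs, b, hb, h, hh, rfl⟩ := hc
        have e : ι k x * (s * (b * ι k h)) = ((s * ι k x) * b) * ι k h := by
          rw [← mul_assoc, hcommS x hx0 s hs, mul_assoc (s * ι k x) b (ι k h), ← mul_assoc]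
        rw [e]
        exact hJmem _ h hh
      | zero => rw [mul_zero]; exact zero_mem _
      | add c d _ _ hc hd => rw [mul_add]; exact add_mem hc hd
      | smul a c _ hc => rw [mul_smul_comm]; exact Submodule.smul_mem _ _ hc
    obtain ⟨σ, hσ, j, hj, he⟩ := Submodule.mem_sup.mp (hTop w)
    have e : ι k x * w = σ * ι k x + ι k x * j := by
      rw [← he, mul_add, hcommS x hx0 σ ((Subalgebra.mem_toSubmodule S).mp hσ)]
    rw [e]
    exact add_mem (hJmem σ x hxH) (hjcase j hj)
  -- the quotient module and the left-multiplication action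
  obtain ⟨F, hF⟩ : ∃ F : UniversalEnvelopingAlgebra k L →ₗ[k]
      Module.End k (UniversalEnvelopingAlgebra k L ⧸ J),
      ∀ (u w : UniversalEnvelopingAlgebra k L),
        F u (Submodule.Quotient.mk w) = Submodule.Quotient.mk (u * w) := by
    have hmap : ∀ u : UniversalEnvelopingAlgebra k L, J ≤ J.comap (LinearMap.mulLeft k u) :=
      fun u j hj => hJstab u j hj
    refine ⟨{ toFun := fun u => Submodule.mapQ J J (LinearMap.mulLeft k u) (hmap u)
              map_add' := ?_
              map_smul' := ?_ }, ?_⟩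
    · intro u v
      refine LinearMap.ext fun q => ?_
      obtain ⟨w, rfl⟩ := Submodule.Quotient.mk_surjective J q
      simp only [Submodule.mapQ_apply, LinearMap.mulLeft_apply, LinearMap.add_apply,
        ← Submodule.Quotient.mk_add, add_mul]
    · intro r u
      refine LinearMap.ext fun q => ?_
      obtain ⟨w, rfl⟩ := Submodule.Quotient.mk_surjective J q
      simp only [Submodule.mapQ_apply, LinearMap.mulLeft_apply, RingHom.id_apply,
        LinearMap.smul_apply, ← Submodule.Quotient.mk_smul, smul_mul_assoc]
    · intro u w
      exact Submodule.mapQ_apply J J (LinearMap.mulLeft k u) (h := hmap u) w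
  obtain ⟨τ, hτ⟩ : ∃ τ : M →ₗ⁅k⁆ Module.End k (UniversalEnvelopingAlgebra k L ⧸ J),
      ∀ (a : M) (w : UniversalEnvelopingAlgebra k L),
        τ a (Submodule.Quotient.mk w) = Submodule.Quotient.mk (ι k (incl a) * w) := by
    refine ⟨{ toFun := fun a => F (ι k (incl a))
              map_add' := ?_
              map_smul' := ?_
              map_lie' := ?_ }, fun a w => hF _ w⟩
    · intro a b
      show F (ι k (incl (a + b))) = F (ι k (incl a)) + F (ι k (incl b))
      rw [map_add, map_add, map_add]
    · intro r a
      show F (ι k (incl (r • a))) = (RingHom.id k) r • F (ι k (incl a))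
      rw [map_smul, map_smul, map_smul, RingHom.id_apply]
    · intro a b
      have hNa : incl a ∈ N := hrange ▸ LinearMap.mem_range_self incl a
      have hNb : incl b ∈ N := hrange ▸ LinearMap.mem_range_self incl b
      have h0 : ∀ m : M, ⁅πH ⁅incl a, incl b⁆, incl m⁆ = (0 : L) := fun m =>
        htame _ hNa _ hNb _ (hrange ▸ LinearMap.mem_range_self incl m)
      show F (ι k (incl ⁅a, b⁆)) = ⁅F (ι k (incl a)), F (ι k (incl b))⁆
      refine LinearMap.ext fun q => ?_
      obtain ⟨w, rfl⟩ := Submodule.Quotient.mk_surjective J q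
      rw [Ring.lie_def, LinearMap.sub_apply, Module.End.mul_apply, Module.End.mul_apply,
        hF, hF, hF, hF, hF]
      have e1 : ι k (incl a) * (ι k (incl b) * w) - ι k (incl b) * (ι k (incl a) * w)
          = ι k (πH ⁅incl a, incl b⁆) * w + ι k (incl ⁅a, b⁆) * w := by
        have h2 := LieHom.map_lie (ι k : L →ₗ⁅k⁆ UniversalEnvelopingAlgebra k L)
          (incl a) (incl b)
        rw [Ring.lie_def] at h2
        have h3 : ι k ⁅incl a, incl b⁆
            = ι k (πH ⁅incl a, incl b⁆) + ι k (incl ⁅a, b⁆) := by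
          rw [hbr a b, ← map_add, hsum]
        rw [← mul_assoc, ← mul_assoc, ← sub_mul, ← h2, h3, add_mul]
      rw [← Submodule.mkQ_apply, ← Submodule.mkQ_apply, ← Submodule.mkQ_apply, ← map_sub, e1,
        map_add]
      have hz : Submodule.mkQ J (ι k (πH ⁅incl a, incl b⁆) * w) = 0 := by
        rw [Submodule.mkQ_apply, Submodule.Quotient.mk_eq_zero]
        exact hH0 _ (hπH _) h0 w
      rw [hz, zero_add]
  -- lift ρ restricted to S acts by left multiplication
  have hL1 : ∀ s ∈ S, ∃ m : UniversalEnvelopingAlgebra k M,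
      UniversalEnvelopingAlgebra.lift k ρ s = LinearMap.mulLeft k m ∧
      UniversalEnvelopingAlgebra.lift k ρ s 1 = m := by
    intro s hs
    induction hs using Algebra.adjoin_induction with
    | mem c hc =>
      obtain ⟨a, rfl⟩ := hc
      refine ⟨ι k a, ?_, ?_⟩
      · rw [UniversalEnvelopingAlgebra.lift_ι_apply]
        exact LinearMap.ext fun u => by rw [hρ₁, LinearMap.mulLeft_apply]
      · rw [UniversalEnvelopingAlgebra.lift_ι_apply, hρ₁, mul_one]
    | algebraMap r =>
      refine ⟨algebraMap k _ r, ?_, ?_⟩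
      · rw [AlgHom.commutes]
        exact LinearMap.ext fun u => by
          rw [Module.algebraMap_end_apply, LinearMap.mulLeft_apply, ← Algebra.smul_def]
      · rw [AlgHom.commutes, Module.algebraMap_end_apply, Algebra.algebraMap_eq_smul_one]
    | add x y hx hy ihx ihy =>
      obtain ⟨mx, hx1, hx2⟩ := ihx
      obtain ⟨my, hy1, hy2⟩ := ihy
      refine ⟨mx + my, ?_, ?_⟩
      · rw [map_add, hx1, hy1]
        exact LinearMap.ext fun u => by
          simp only [LinearMap.add_apply, LinearMap.mulLeft_apply, add_mul]
      · rw [map_add, LinearMap.add_apply, hx2, hy2]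
    | mul x y hx hy ihx ihy =>
      obtain ⟨mx, hx1, hx2⟩ := ihx
      obtain ⟨my, hy1, hy2⟩ := ihy
      refine ⟨mx * my, ?_, ?_⟩
      · rw [map_mul, hx1, hy1]
        exact LinearMap.ext fun u => by
          simp only [Module.End.mul_apply, LinearMap.mulLeft_apply, mul_assoc]
      · rw [map_mul, Module.End.mul_apply, hy2, hx1, LinearMap.mulLeft_apply]
  have hφmul : ∀ s ∈ S, ∀ u : UniversalEnvelopingAlgebra k L,
      UniversalEnvelopingAlgebra.lift k ρ (s * u) 1
        = UniversalEnvelopingAlgebra.lift k ρ s 1 * UniversalEnvelopingAlgebra.lift k ρ u 1 := by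
    intro s hs u
    obtain ⟨m, hm1, hm2⟩ := hL1 s hs
    rw [map_mul, Module.End.mul_apply, hm1]
    simp only [LinearMap.mulLeft_apply, mul_one]
  -- surjectivity
  have hsurj : ∀ m : UniversalEnvelopingAlgebra k M,
      ∃ s, s ∈ S ∧ UniversalEnvelopingAlgebra.lift k ρ s 1 = m := by
    refine uea_ind k M ?_ ?_ ?_ ?_
    · intro r
      refine ⟨algebraMap k _ r, algebraMap_mem S r, ?_⟩
      rw [AlgHom.commutes, Module.algebraMap_end_apply, Algebra.algebraMap_eq_smul_one]
    · intro a
      refine ⟨ι k (incl a), hSgen a, ?_⟩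
      rw [UniversalEnvelopingAlgebra.lift_ι_apply, hρ₁, mul_one]
    · rintro m₁ m₂ ⟨s₁, hs₁, e₁⟩ ⟨s₂, hs₂, e₂⟩
      exact ⟨s₁ * s₂, mul_mem hs₁ hs₂, by rw [hφmul s₁ hs₁, e₁, e₂]⟩
    · rintro m₁ m₂ ⟨s₁, hs₁, e₁⟩ ⟨s₂, hs₂, e₂⟩
      exact ⟨s₁ + s₂, add_mem hs₁ hs₂, by rw [map_add, LinearMap.add_apply, e₁, e₂]⟩
  -- J is contained in the kernel
  have hkerJ : ∀ j ∈ J, UniversalEnvelopingAlgebra.lift k ρ j 1 = 0 := by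
    intro j hj
    induction hj using Submodule.span_induction with
    | mem c hc =>
      obtain ⟨u, h, hh, rfl⟩ := hc
      rw [map_mul, Module.End.mul_apply, UniversalEnvelopingAlgebra.lift_ι_apply, hρ₂ h hh,
        map_zero]
    | zero => rw [map_zero, LinearMap.zero_apply]
    | add c d _ _ hc hd => rw [map_add, LinearMap.add_apply, hc, hd, add_zero]
    | smul a c _ hc => rw [map_smul, LinearMap.smul_apply, hc, smul_zero]
  -- key identity on S
  have hBlem : ∀ s ∈ S, ∀ w : UniversalEnvelopingAlgebra k L,
      UniversalEnvelopingAlgebra.lift k τ (UniversalEnvelopingAlgebra.lift k ρ s 1)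
          (Submodule.Quotient.mk w)
        = Submodule.Quotient.mk (s * w) := by
    intro s hs
    induction hs using Algebra.adjoin_induction with
    | mem c hc =>
      obtain ⟨a, rfl⟩ := hc
      intro w
      rw [UniversalEnvelopingAlgebra.lift_ι_apply, hρ₁, mul_one,
        UniversalEnvelopingAlgebra.lift_ι_apply, hτ]
    | algebraMap r =>
      intro w
      rw [AlgHom.commutes, Module.algebraMap_end_apply, ← Algebra.algebraMap_eq_smul_one,
        AlgHom.commutes, Module.algebraMap_end_apply, ← Submodule.Quotient.mk_smul,
        Algebra.smul_def]
    | add x y hx hy ihx ihy =>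
      intro w
      rw [map_add, LinearMap.add_apply, map_add, LinearMap.add_apply, ihx, ihy,
        ← Submodule.Quotient.mk_add, add_mul]
    | mul x y hx hy ihx ihy =>
      intro w
      rw [hφmul x hx y, map_mul, Module.End.mul_apply, ihy, ihx, mul_assoc]
  -- the key identity
  have hKI : ∀ w : UniversalEnvelopingAlgebra k L,
      UniversalEnvelopingAlgebra.lift k τ (UniversalEnvelopingAlgebra.lift k ρ w 1)
          (Submodule.Quotient.mk 1)
        = Submodule.Quotient.mk w := by
    intro w
    obtain ⟨σ, hσ, j, hj, he⟩ := Submodule.mem_sup.mp (hTop w)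
    have hjJ : j ∈ J := hJS_le_J hj
    rw [← he]
    have e : UniversalEnvelopingAlgebra.lift k ρ (σ + j) 1
        = UniversalEnvelopingAlgebra.lift k ρ σ 1 := by
      rw [map_add, LinearMap.add_apply, hkerJ j hjJ, add_zero]
    rw [e, hBlem σ ((Subalgebra.mem_toSubmodule S).mp hσ) 1, mul_one]
    have hj0 : (Submodule.Quotient.mk j : UniversalEnvelopingAlgebra k L ⧸ J) = 0 :=
      (Submodule.Quotient.mk_eq_zero J).mpr hjJ
    rw [Submodule.Quotient.mk_add, hj0, add_zero]
  -- conclusion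
  constructor
  · intro m
    obtain ⟨s, _, e⟩ := hsurj m
    exact ⟨s, e⟩
  · intro w
    constructor
    · intro h0
      have hk := hKI w
      rw [h0, map_zero, LinearMap.zero_apply] at hk
      exact (Submodule.Quotient.mk_eq_zero J).mp hk.symm
    · intro hw
      exact hkerJ w hw
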